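/- arXiv:1602.06153 — 5 statements merged into one kernel-verified Lean document; each statement's English description precedes it below -/
import Mathlib

section
/- For Riemann data ρ₋ < ρ₊ in [0, ρ_max], the initial speed of the turning point, ξ̇(0) = (1/2){[v_max − v(ρ₋)]·[Υ(ρ₊) − Υ(ρ₋)] + v_max·[c(ρ₋) − c(ρ₊)]}, is strictly negative. -/
open Set

/-- For Riemann data `ρ₋ < ρ₊` in `[0, ρ_max]`, the initial speed of the
turning point `ξ̇(0) = (1/2)·{v_max·[c' ρ₋ · ρ₋ − c' ρ₊ · ρ₊] + v ρ₋ · [Υ ρ₋ − Υ ρ₊]}`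
equals `(1/2)·{[v_max − v ρ₋]·[Υ ρ₊ − Υ ρ₋] + v_max·[c ρ₋ − c ρ₊]}` and is strictly
negative. -/
theorem riemann_turning_point_speed_neg
    (ρmax vmax : ℝ) (hρmax : 0 < ρmax) (hρmax1 : ρmax < 1)
    (v : ℝ → ℝ) (hv : ContDiff ℝ 1 v) (hvanti : StrictAntiOn v (Set.Icc 0 1))
    (hv0 : v 0 = vmax) (hvmax : 0 < vmax) (hvnonneg : ∀ ρ ∈ Set.Icc (0 : ℝ) 1, 0 ≤ v ρ)
    (c : ℝ → ℝ) (hc : ContDiff ℝ 2 c) (hc0 : c 0 = 1)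
    (hcmono : ∀ ρ ∈ Set.Icc (0 : ℝ) ρmax, 0 ≤ deriv c ρ)
    (hcconv : ∀ ρ ∈ Set.Ioc (0 : ℝ) ρmax, 0 < deriv (deriv c) ρ)
    (Υ : ℝ → ℝ) (hΥ : Υ = fun ρ => c ρ - ρ * deriv c ρ)
    (ρm ρp : ℝ) (hρm : 0 ≤ ρm) (hlt : ρm < ρp) (hρp : ρp ≤ ρmax) :
    (1 / 2) * (vmax * (deriv c ρm * ρm - deriv c ρp * ρp) + v ρm * (Υ ρm - Υ ρp)) =
      (1 / 2) * ((vmax - v ρm) * (Υ ρp - Υ ρm) + vmax * (c ρm - c ρp)) ∧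
    (1 / 2) * (vmax * (deriv c ρm * ρm - deriv c ρp * ρp) + v ρm * (Υ ρm - Υ ρp)) < 0 := by
  have hρm1 : ρm ∈ Set.Icc (0:ℝ) 1 := ⟨hρm, le_of_lt (lt_of_lt_of_le (lt_of_lt_of_le hlt hρp) hρmax1.le)⟩
  have h01 : (0:ℝ) ∈ Set.Icc (0:ℝ) 1 := ⟨le_refl 0, zero_le_one⟩
  -- deriv c is continuous
  have hdc : Continuous (deriv c) := (hc.iterate_deriv' 1 1).continuous
  -- deriv c strictly mono on Icc 0 ρmax
  have hdiff : Differentiable ℝ c := hc.differentiable two_ne_zero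
  have hdiff' : Differentiable ℝ (deriv c) := by
    have h1 : ContDiff ℝ 1 (deriv c) := hc.iterate_deriv' 1 1
    exact h1.differentiable one_ne_zero
  have hsm : StrictMonoOn (deriv c) (Set.Icc 0 ρmax) := by
    apply StrictMonoOn.mono (s := Set.Icc 0 ρmax) ?_ le_rfl
    exact strictMonoOn_of_deriv_pos (convex_Icc 0 ρmax) hdc.continuousOn
      (fun x hx => by
        rw [interior_Icc] at hx
        exact hcconv x ⟨hx.1, hx.2.le⟩)
  -- c strictly mono on Icc 0 ρmax
  have hcm : StrictMonoOn c (Set.Icc 0 ρmax) := by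
    apply strictMonoOn_of_deriv_pos (convex_Icc 0 ρmax) hdiff.continuous.continuousOn
    intro x hx
    rw [interior_Icc] at hx
    have h1 : deriv c 0 < deriv c x :=
      hsm ⟨le_rfl, hρmax.le⟩ ⟨hx.1.le, hx.2.le⟩ hx.1
    have h0 : 0 ≤ deriv c 0 := hcmono 0 ⟨le_rfl, hρmax.le⟩
    linarith
  have hmem_m : ρm ∈ Set.Icc (0:ℝ) ρmax := ⟨hρm, le_trans hlt.le hρp⟩
  have hmem_p : ρp ∈ Set.Icc (0:ℝ) ρmax := ⟨le_trans hρm hlt.le, hρp⟩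
  have hclt : c ρm < c ρp := hcm hmem_m hmem_p hlt
  have hdclt : deriv c ρm < deriv c ρp := hsm hmem_m hmem_p hlt
  -- MVT: ∃ ξ ∈ (ρm, ρp), deriv c ξ = slope
  obtain ⟨ξ, hξ, hξeq⟩ := exists_deriv_eq_slope c hlt hdiff.continuous.continuousOn
    (fun x _ => (hdiff x).differentiableWithinAt)
  have hξmem : ξ ∈ Set.Icc (0:ℝ) ρmax := ⟨le_trans hρm hξ.1.le, le_trans hξ.2.le hρp⟩
  have hξlt : deriv c ξ < deriv c ρp := hsm hξmem hmem_p hξ.2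
  have hslope : c ρp - c ρm < deriv c ρp * (ρp - ρm) := by
    have h : c ρp - c ρm = deriv c ξ * (ρp - ρm) := by
      rw [eq_div_iff (by linarith : ρp - ρm ≠ 0)] at hξeq
      linarith [hξeq]
    rw [h]
    exact mul_lt_mul_of_pos_right hξlt (by linarith)
  -- Υ ρp < Υ ρm
  have hΥlt : Υ ρp < Υ ρm := by
    rw [hΥ]
    show c ρp - ρp * deriv c ρp < c ρm - ρm * deriv c ρm
    nlinarith [hcmono ρm hmem_m]
  -- vmax - v ρm ≥ 0
  have hvge : 0 ≤ vmax - v ρm := by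
    rcases eq_or_lt_of_le hρm with h | h
    · rw [← h, hv0]; linarith
    · have := hvanti h01 hρm1 h
      rw [hv0] at this; linarith
  constructor
  · rw [hΥ]; ring
  · have heq : (1 / 2) * (vmax * (deriv c ρm * ρm - deriv c ρp * ρp) + v ρm * (Υ ρm - Υ ρp)) =
      (1 / 2) * ((vmax - v ρm) * (Υ ρp - Υ ρm) + vmax * (c ρm - c ρp)) := by
      rw [hΥ]; ring
    rw [heq]
    nlinarith [mul_nonpos_of_nonneg_of_nonpos hvge (by linarith : Υ ρp - Υ ρm ≤ 0)]
end

section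
/- With c(ρ) = 1/(1−ρ) and v(ρ) = 1−ρ, if both ρ₋ and ρ₊ lie in [0, 1/2), then F(ρ₋, ρ₊) > 0 (the no-collision condition for the Riemann problem holds). -/
open Set

lemma deriv_c_aux (x : ℝ) (hx : x ≠ 1) :
    deriv (fun ρ : ℝ => (1 - ρ)⁻¹) x = ((1 - x) ^ 2)⁻¹ := by
  have h : (1 : ℝ) - x ≠ 0 := sub_ne_zero.mpr (Ne.symm hx)
  have h1 : HasDerivAt (fun ρ : ℝ => 1 - ρ) (-1) x := by
    simpa using (hasDerivAt_id x).const_sub 1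
  have h2 : HasDerivAt (fun ρ : ℝ => (1 - ρ)⁻¹) (- -1 / (1 - x) ^ 2) x := h1.inv h
  have : HasDerivAt (fun ρ : ℝ => (1 - ρ)⁻¹) (((1 - x) ^ 2)⁻¹) x := by
    convert h2 using 1
    field_simp
  exact this.deriv

/-- With `c ρ = 1/(1−ρ)` and `v ρ = 1−ρ`, if both `ρ₋` and `ρ₊` lie in
`[0, 1/2)`, then `F ρ₋ ρ₊ > 0` (the no-collision condition for the Riemann problem). -/
theorem no_collision_below_half
    (v c Υ : ℝ → ℝ) (F : ℝ → ℝ → ℝ)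
    (hv : v = fun ρ => 1 - ρ) (hc : c = fun ρ => (1 - ρ)⁻¹)
    (hΥ : Υ = fun ρ => c ρ - ρ * deriv c ρ)
    (hF : F = fun ρm ρp =>
      v 0 * (deriv c ρm * ρm - deriv c ρp * ρp) + v ρm * (Υ ρm - Υ ρp) + 2 * v ρp) :
    ∀ ρm ∈ Set.Ico (0 : ℝ) (1 / 2), ∀ ρp ∈ Set.Ico (0 : ℝ) (1 / 2), 0 < F ρm ρp := by
  subst hv hc hΥ hF
  rintro ρm ⟨hm0, hm1⟩ ρp ⟨hp0, hp1⟩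
  have hmne : ρm ≠ 1 := by linarith
  have hpne : ρp ≠ 1 := by linarith
  simp only [deriv_c_aux ρm hmne, deriv_c_aux ρp hpne]
  have hm : (0:ℝ) < 1 - ρm := by linarith
  have hp : (0:ℝ) < 1 - ρp := by linarith
  have hm' : (1 - ρm) ≠ 0 := ne_of_gt hm
  have hp' : (1 - ρp) ≠ 0 := ne_of_gt hp
  have h2p : (0:ℝ) < 1 - 2 * ρp := by linarith
  have heq : (1 - 0) * (((1 - ρm) ^ 2)⁻¹ * ρm - ((1 - ρp) ^ 2)⁻¹ * ρp) +
      (1 - ρm) * ((1 - ρm)⁻¹ - ρm * ((1 - ρm) ^ 2)⁻¹ - ((1 - ρp)⁻¹ - ρp * ((1 - ρp) ^ 2)⁻¹)) +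
      2 * (1 - ρp)
      = (2 - ρp) * (1 - 2 * ρp) / (1 - ρp) + ρm ^ 2 / (1 - ρm) ^ 2
        + ρm * (1 - 2 * ρp) / (1 - ρp) ^ 2 := by
    field_simp
    ring
  have hpos : (0:ℝ) < (2 - ρp) * (1 - 2 * ρp) / (1 - ρp) + ρm ^ 2 / (1 - ρm) ^ 2
      + ρm * (1 - 2 * ρp) / (1 - ρp) ^ 2 := by
    have t1 : (0:ℝ) < (2 - ρp) * (1 - 2 * ρp) / (1 - ρp) := by
      apply div_pos _ hp; nlinarith
    have t2 : (0:ℝ) ≤ ρm ^ 2 / (1 - ρm) ^ 2 := by positivity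
    have t3 : (0:ℝ) ≤ ρm * (1 - 2 * ρp) / (1 - ρp) ^ 2 := by positivity
    linarith
  calc (0:ℝ) < _ := hpos
    _ = _ := heq.symm
end

section
/- Discrete maximum principle for backward follow-the-leader: if initially m/(x̄_i − x̄_{i−1}) ≤ ρ_max for all i = 1,…,I₀ and v is C¹ decreasing with v(0) = v_max, then for all t ≥ 0 along the solution of ẋ₀ = −v_max, ẋ_i = −v(m/(x_i − x_{i−1})), the discrete densities satisfy m/(x_i(t) − x_{i−1}(t)) ≤ ρ_max; consequently ẋ_{I₀}(t) ≤ −v(ρ_max) for all t. -/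
open Set

/-- Barrier lemma: a single gap `z - y` stays above `c = m/ρmax` provided the leader's
velocity is at most `-v ρmax` and the follower obeys the FTL ODE. -/
lemma ftl_gap_barrier (v : ℝ → ℝ) (hv : ContDiff ℝ 1 v)
    (m ρmax c : ℝ) (hm : 0 < m) (hρ0 : 0 < ρmax) (hρ1 : ρmax ≤ 1) (hc : c = m / ρmax)
    (y z : ℝ → ℝ)
    (hy : ∀ t : ℝ, 0 ≤ t → HasDerivAt y (deriv y t) t)
    (hy' : ∀ t : ℝ, 0 ≤ t → deriv y t ≤ -v ρmax)
    (hz : ∀ t : ℝ, 0 ≤ t → HasDerivAt z (-(v (m / (z t - y t)))) t)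
    (h0 : c ≤ z 0 - y 0) :
    ∀ t : ℝ, 0 ≤ t → c ≤ z t - y t := by
  have hcpos : 0 < c := by rw [hc]; positivity
  have hρc : m / c = ρmax := by rw [hc]; field_simp
  -- Lipschitz constant for v on [0,2]
  have hvd : Differentiable ℝ v := hv.differentiable one_ne_zero
  have hvc : Continuous (deriv v) := hv.continuous_deriv le_rfl
  obtain ⟨K, hK⟩ := (isCompact_Icc (a := (0:ℝ)) (b := 2)).exists_bound_of_continuousOn
    hvc.continuousOn
  have hK0 : 0 ≤ K := le_trans (norm_nonneg _) (hK 0 ⟨le_rfl, by norm_num⟩)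
  have hvlip : ∀ a ∈ Icc (0:ℝ) 2, ∀ b ∈ Icc (0:ℝ) 2, |v a - v b| ≤ K * |a - b| := by
    intro a ha b hb
    have := (convex_Icc (0:ℝ) 2).norm_image_sub_le_of_norm_deriv_le
      (fun x _ => hvd.differentiableAt) hK hb ha
    simpa [Real.norm_eq_abs] using this
  set L := 2 * K * m / (c * c) with hL
  have hL0 : 0 ≤ L := by positivity
  -- the gap function
  set g : ℝ → ℝ := fun t => z t - y t with hgdef
  have hg : ∀ t : ℝ, 0 ≤ t → HasDerivAt g (-(v (m / g t)) - deriv y t) t :=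
    fun t ht => (hz t ht).sub (hy t ht)
  have gcont : ∀ t : ℝ, 0 ≤ t → ContinuousAt g t := fun t ht => (hg t ht).continuousAt
  by_contra hcon
  push_neg at hcon
  obtain ⟨b₀, hb₀, hlt0⟩ := hcon
  have hlt : g b₀ < c := hlt0
  have h0' : c ≤ g 0 := h0
  clear_value g
  -- extend g continuously to all of ℝ
  set G : ℝ → ℝ := fun s => g (max s 0) with hGdef
  have hGg : ∀ s : ℝ, 0 ≤ s → G s = g s := fun s hs => by
    simp [hGdef, max_eq_left hs]
  have hGcont : Continuous G := by
    have hgon : ContinuousOn g (Ici 0) := fun t ht => (gcont t ht).continuousWithinAt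
    exact hgon.comp_continuous (continuous_id.max continuous_const)
      (fun s => le_max_right s 0)
  -- last time before b₀ when g ≥ c
  set S : Set ℝ := Icc 0 b₀ ∩ G ⁻¹' (Ici c) with hSdef
  have hSclosed : IsClosed S := isClosed_Icc.inter (isClosed_Ici.preimage hGcont)
  have hSne : S.Nonempty := ⟨0, ⟨le_rfl, hb₀⟩, by
    simp only [mem_preimage, mem_Ici]; rw [hGg 0 le_rfl]; exact h0'⟩
  have hSbdd : BddAbove S := ⟨b₀, fun s hs => hs.1.2⟩
  set τ := sSup S with hτdef
  have hτS : τ ∈ S := hSclosed.csSup_mem hSne hSbdd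
  have hτ0 : 0 ≤ τ := hτS.1.1
  have hτb₀ : τ ≤ b₀ := hτS.1.2
  have hgτ : c ≤ g τ := by
    have := hτS.2; rw [mem_preimage, mem_Ici, hGg τ hτ0] at this; exact this
  have hafter : ∀ s : ℝ, τ < s → s ≤ b₀ → g s < c := by
    intro s h1 h2
    by_contra h
    push_neg at h
    have hsS : s ∈ S := ⟨⟨le_trans hτ0 h1.le, h2⟩, by
      simp only [mem_preimage, mem_Ici]; rw [hGg s (le_trans hτ0 h1.le)]; exact h⟩
    exact absurd (le_csSup hSbdd hsS) (not_le.2 h1)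
  have hτlt : τ < b₀ := lt_of_le_of_ne hτb₀ (by
    intro h; rw [h] at hgτ; exact absurd hgτ (not_le.2 hlt))
  have hgτc : g τ = c := by
    refine le_antisymm ?_ hgτ
    have htend : Filter.Tendsto g (nhdsWithin τ (Ioi τ)) (nhds (g τ)) :=
      ((gcont τ hτ0).tendsto).mono_left nhdsWithin_le_nhds
    refine le_of_tendsto htend ?_
    filter_upwards [Ioc_mem_nhdsGT hτlt] with s hs
    exact (hafter s hs.1 hs.2).le
  -- choose b close to τ so that g stays in [c/2, c] on [τ, b]
  obtain ⟨ε, hε, hball⟩ := Metric.continuousAt_iff.mp (gcont τ hτ0) (c/2) (by positivity)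
  set b := min b₀ (τ + ε/2) with hbdef
  have hτltb : τ < b := lt_min hτlt (by linarith)
  have hbb₀ : b ≤ b₀ := min_le_left _ _
  have hband : ∀ s ∈ Icc τ b, c/2 ≤ g s ∧ g s ≤ c := by
    intro s hs
    have hdist : dist s τ < ε := by
      rw [Real.dist_eq, abs_of_nonneg (sub_nonneg.2 hs.1)]
      have : s ≤ τ + ε/2 := le_trans hs.2 (min_le_right _ _)
      linarith
    have h2 := hball hdist
    rw [Real.dist_eq, hgτc] at h2
    have hlow : c/2 ≤ g s := by
      have := abs_lt.mp h2
      linarith [this.1]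
    refine ⟨hlow, ?_⟩
    rcases eq_or_lt_of_le hs.1 with h | h
    · rw [← h, hgτc]
    · exact (hafter s h (le_trans hs.2 hbb₀)).le
  have hgb : g b < c := hafter b hτltb hbb₀
  -- Gronwall-type argument on [τ, b]
  set w : ℝ → ℝ := fun s => c - g s with hwdef
  clear_value w
  set φ : ℝ → ℝ := fun s => w s * Real.exp (-L * s) with hφdef
  clear_value φ
  have hw' : ∀ s ∈ Icc τ b, HasDerivAt w (deriv y s + v (m / g s)) s := by
    intro s hs
    have hs0 : 0 ≤ s := le_trans hτ0 hs.1
    rw [hwdef]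
    have h : HasDerivAt (fun x => c - g x) (0 - (-(v (m / g s)) - deriv y s)) s :=
      (hasDerivAt_const s c).sub (hg s hs0)
    convert h using 1
    ring
  have hbound : ∀ s ∈ Icc τ b, deriv y s + v (m / g s) ≤ L * w s := by
    intro s hs
    have hs0 : 0 ≤ s := le_trans hτ0 hs.1
    obtain ⟨h1, h2⟩ := hband s hs
    have hgpos : 0 < g s := lt_of_lt_of_le (by positivity) h1
    have hρle : m / g s ≤ 2 * ρmax := by
      have hstep : m / g s ≤ m / (c/2) := div_le_div_of_nonneg_left hm.le (by positivity) h1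
      have h2c : m / (c/2) = 2 * (m / c) := by field_simp
      rw [h2c, hρc] at hstep
      exact hstep
    have hmem1 : m / g s ∈ Icc (0:ℝ) 2 := ⟨by positivity, by linarith⟩
    have hmem2 : ρmax ∈ Icc (0:ℝ) 2 := ⟨hρ0.le, by linarith⟩
    have hge : m / c ≤ m / g s := div_le_div_of_nonneg_left hm.le hgpos h2
    rw [hρc] at hge
    calc deriv y s + v (m / g s)
        ≤ v (m / g s) - v ρmax := by linarith [hy' s hs0]
      _ ≤ |v (m / g s) - v ρmax| := le_abs_self _
      _ ≤ K * |m / g s - ρmax| := hvlip _ hmem1 _ hmem2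
      _ = K * (m / g s - m / c) := by rw [abs_of_nonneg (by linarith), hρc]
      _ ≤ L * w s := by
          rw [hwdef]
          simp only
          have hkey : m / g s - m / c ≤ 2 * m / (c * c) * (c - g s) := by
            rw [div_sub_div _ _ hgpos.ne' hcpos.ne', div_mul_eq_mul_div,
              div_le_div_iff₀ (by positivity) (by positivity)]
            have hfac : 0 ≤ m * (c - g s) * c := by
              have : 0 ≤ c - g s := by linarith
              positivity
            have ha : (0:ℝ) ≤ c - g s := by linarith
            have hb2 : (0:ℝ) ≤ 2 * g s - c := by linarith
            nlinarith [mul_nonneg (mul_nonneg (mul_nonneg hm.le ha) hcpos.le) hb2]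
          calc K * (m / g s - m / c) ≤ K * (2 * m / (c * c) * (c - g s)) :=
                mul_le_mul_of_nonneg_left hkey hK0
            _ = L * (c - g s) := by rw [hL]; ring
  have hφ' : ∀ s ∈ Icc τ b, HasDerivAt φ
      ((deriv y s + v (m / g s)) * Real.exp (-L * s) + w s * (Real.exp (-L * s) * (-L))) s := by
    intro s hs
    have hexp : HasDerivAt (fun s : ℝ => Real.exp (-L * s)) (Real.exp (-L * s) * (-L)) s := by
      have h1 : HasDerivAt (fun s : ℝ => -L * s) (-L) s := by
        simpa using (hasDerivAt_id s).const_mul (-L)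
      exact h1.exp
    rw [hφdef]
    exact (hw' s hs).mul hexp
  have hφanti : AntitoneOn φ (Icc τ b) := by
    apply antitoneOn_of_deriv_nonpos (convex_Icc τ b)
    · exact fun s hs => ((hφ' s hs).continuousAt).continuousWithinAt
    · intro s hs
      rw [interior_Icc] at hs
      exact ((hφ' s (Ioo_subset_Icc_self hs)).differentiableAt).differentiableWithinAt
    · intro s hs
      rw [interior_Icc] at hs
      have hsI : s ∈ Icc τ b := Ioo_subset_Icc_self hs
      rw [(hφ' s hsI).deriv]
      have hb1 := hbound s hsI
      have hep := Real.exp_pos (-L * s)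
      nlinarith [mul_le_mul_of_nonneg_right hb1 hep.le]
  have hφτ : φ τ = 0 := by
    simp [hφdef, hwdef, hgτc]
  have hφb : φ b ≤ 0 := by
    rw [← hφτ]
    exact hφanti ⟨le_rfl, hτltb.le⟩ ⟨hτltb.le, le_rfl⟩ hτltb.le
  have hwb : w b ≤ 0 := by
    by_contra h
    push_neg at h
    have := mul_pos h (Real.exp_pos (-L * b))
    rw [hφdef] at hφb
    simp only at hφb
    linarith
  rw [hwdef] at hwb
  simp only at hwb
  linarith

/-- Discrete maximum principle for the backward follow-the-leader scheme:
if initially `m/(x̄ᵢ − x̄ᵢ₋₁) ≤ ρ_max` for `i = 1, …, I₀` and `v` is C¹, strictly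
decreasing with `v 0 = v_max`, then along the solution of `ẋ₀ = −v_max`,
`ẋᵢ = −v(m/(xᵢ − xᵢ₋₁))`, the discrete densities satisfy `m/(xᵢ t − xᵢ₋₁ t) ≤ ρ_max`
for all `t ≥ 0`; consequently `ẋ_{I₀} t ≤ −v ρ_max` for all `t ≥ 0`. -/
theorem discrete_maximum_principle
    (v : ℝ → ℝ) (vmax : ℝ) (hv : ContDiff ℝ 1 v) (hvanti : StrictAntiOn v (Set.Icc 0 1))
    (hv0 : v 0 = vmax) (hvmax : 0 < vmax)
    (m ρmax : ℝ) (hm : 0 < m) (hρmax : ρmax ∈ Set.Ioc (0 : ℝ) 1)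
    (I₀ : ℕ) (hI₀ : 1 ≤ I₀) (xbar : ℕ → ℝ)
    (hgap : ∀ i : ℕ, 1 ≤ i → i ≤ I₀ → m / ρmax ≤ xbar i - xbar (i - 1))
    (x : ℕ → ℝ → ℝ) (hinit : ∀ i : ℕ, i ≤ I₀ → x i 0 = xbar i)
    (hODE0 : ∀ t : ℝ, 0 ≤ t → HasDerivAt (x 0) (-vmax) t)
    (hODE : ∀ i : ℕ, 1 ≤ i → i ≤ I₀ → ∀ t : ℝ, 0 ≤ t →
      HasDerivAt (x i) (-(v (m / (x i t - x (i - 1) t)))) t) :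
    (∀ t : ℝ, 0 ≤ t → ∀ i : ℕ, 1 ≤ i → i ≤ I₀ →
        m / (x i t - x (i - 1) t) ≤ ρmax) ∧
      ∀ t : ℝ, 0 ≤ t → -(v (m / (x I₀ t - x (I₀ - 1) t))) ≤ -(v ρmax) := by
  obtain ⟨hρ0, hρ1⟩ := hρmax
  have hA : AntitoneOn v (Icc 0 1) := hvanti.antitoneOn
  have hcpos : 0 < m / ρmax := by positivity
  have hρc : m / (m / ρmax) = ρmax := by field_simp
  -- key invariance: each gap stays ≥ m/ρmax
  have key : ∀ i : ℕ, 1 ≤ i → i ≤ I₀ → ∀ t : ℝ, 0 ≤ t →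
      m / ρmax ≤ x i t - x (i - 1) t := by
    intro i
    induction i with
    | zero => omega
    | succ n ih =>
      intro _ hle
      have hsub : (n + 1) - 1 = n := by omega
      rw [hsub]
      -- leader velocity bound
      have hlead : (∀ t : ℝ, 0 ≤ t → HasDerivAt (x n) (deriv (x n) t) t) ∧
          (∀ t : ℝ, 0 ≤ t → deriv (x n) t ≤ -v ρmax) := by
        rcases Nat.eq_zero_or_pos n with hn0 | hnpos
        · subst hn0
          constructor
          · intro t ht
            have h := hODE0 t ht
            rw [h.deriv]
            exact h
          · intro t ht
            rw [(hODE0 t ht).deriv]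
            have : v ρmax ≤ v 0 := hA ⟨le_rfl, zero_le_one⟩ ⟨hρ0.le, hρ1⟩ hρ0.le
            rw [hv0] at this
            linarith
        · have hn1 : 1 ≤ n := hnpos
          have hnI : n ≤ I₀ := le_trans (Nat.le_succ n) hle
          constructor
          · intro t ht
            have h := hODE n hn1 hnI t ht
            rw [h.deriv]
            exact h
          · intro t ht
            rw [(hODE n hn1 hnI t ht).deriv]
            have hgapn : m / ρmax ≤ x n t - x (n - 1) t := ih hn1 hnI t ht
            have hgpos : 0 < x n t - x (n - 1) t := lt_of_lt_of_le hcpos hgapn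
            have hρn : m / (x n t - x (n - 1) t) ≤ ρmax := by
              have := div_le_div_of_nonneg_left hm.le hcpos hgapn
              rwa [hρc] at this
            have hρn0 : 0 ≤ m / (x n t - x (n - 1) t) := by positivity
            have : v ρmax ≤ v (m / (x n t - x (n - 1) t)) :=
              hA ⟨hρn0, le_trans hρn hρ1⟩ ⟨hρ0.le, hρ1⟩ hρn
            linarith
      -- apply the barrier lemma
      have hz : ∀ t : ℝ, 0 ≤ t → HasDerivAt (x (n + 1))
          (-(v (m / (x (n + 1) t - x n t)))) t := by
        intro t ht
        have h := hODE (n + 1) (Nat.le_add_left 1 n) hle t ht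
        rwa [hsub] at h
      have h0 : m / ρmax ≤ x (n + 1) 0 - x n 0 := by
        rw [hinit (n + 1) hle, hinit n (le_trans (Nat.le_succ n) hle)]
        have := hgap (n + 1) (Nat.le_add_left 1 n) hle
        rwa [hsub] at this
      exact ftl_gap_barrier v hv m ρmax (m / ρmax) hm hρ0 hρ1 rfl (x n) (x (n + 1))
        hlead.1 hlead.2 hz h0
  have part1 : ∀ t : ℝ, 0 ≤ t → ∀ i : ℕ, 1 ≤ i → i ≤ I₀ →
      m / (x i t - x (i - 1) t) ≤ ρmax := by
    intro t ht i h1 hi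
    have hgapi := key i h1 hi t ht
    have := div_le_div_of_nonneg_left hm.le hcpos hgapi
    rwa [hρc] at this
  refine ⟨part1, ?_⟩
  intro t ht
  have hρI := part1 t ht I₀ hI₀ le_rfl
  have hgapi := key I₀ hI₀ le_rfl t ht
  have hgpos : 0 < x I₀ t - x (I₀ - 1) t := lt_of_lt_of_le hcpos hgapi
  have hρ0' : 0 ≤ m / (x I₀ t - x (I₀ - 1) t) := by positivity
  have : v ρmax ≤ v (m / (x I₀ t - x (I₀ - 1) t)) :=
    hA ⟨hρ0', le_trans hρI hρ1⟩ ⟨hρ0.le, hρ1⟩ hρI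
  linarith
end

section
/- For the Riemann problem in the case c(ρ) = 1/(1−ρ), there exists a strictly increasing function φ : [0,1) → (0,1] with φ(0) = 1/2 and lim_{ρ→1} φ(ρ) = 1 such that F(ρ₋, ρ₊) > 0 holds for ρ₋ ≤ ρ₊ if and only if ρ₊ < φ(ρ₋). -/
open Set Filter

noncomputable def hAux (ρ x : ℝ) : ℝ := 2*x^2 + x - 1 + ρ^2/(1-ρ)^2 * x + 2*ρ - ρ/x

lemma hAux_strictMono {ρ : ℝ} (hρ0 : 0 ≤ ρ) (hρ1 : ρ < 1) :
    StrictMonoOn (hAux ρ) (Set.Ioi 0) := by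
  intro a ha b hb hab
  simp only [Set.mem_Ioi] at ha hb
  have hA : 0 ≤ ρ^2/(1-ρ)^2 := by positivity
  have h1 : ρ/b ≤ ρ/a := by
    apply div_le_div_of_nonneg_left hρ0 ha hab.le
  unfold hAux
  nlinarith [mul_le_mul_of_nonneg_left hab.le hA, sq_nonneg (a+b), mul_pos ha hb]

lemma hAux_continuousOn {ρ : ℝ} (hρ1 : ρ < 1) :
    ContinuousOn (hAux ρ) (Set.Ioi 0) := by
  unfold hAux
  have h1 : (1-ρ)^2 ≠ 0 := pow_ne_zero _ (sub_ne_zero.2 (by linarith))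
  fun_prop (disch := (intros; first | exact h1 | (simp only [Set.mem_Ioi] at *; positivity)))

lemma hAux_root {ρ : ℝ} (hρ0 : 0 ≤ ρ) (hρ1 : ρ < 1) :
    ∃ x ∈ Set.Ioo (0:ℝ) 1, hAux ρ x = 0 := by
  set t : ℝ := (1-ρ)/8 with ht_def
  have h2 : (0:ℝ) < 1 - ρ := by linarith
  have ht0 : 0 < t := by positivity
  have ht1 : t < 1 := by rw [ht_def]; linarith
  have hne : (1:ℝ) - ρ ≠ 0 := ne_of_gt h2
  have hlt : hAux ρ t < 0 := by
    have e1 : ρ^2/(1-ρ)^2 * t - ρ/t = (ρ^2 - 64*ρ)/(8*(1-ρ)) := by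
      rw [ht_def]; field_simp; ring
    have e2 : (ρ^2 - 64*ρ)/(8*(1-ρ)) ≤ (-63*ρ)/8 := by
      rw [div_le_div_iff₀ (by positivity) (by norm_num)]
      nlinarith
    have ht8 : t ≤ 1/8 := by rw [ht_def]; linarith
    unfold hAux
    nlinarith [sq_nonneg t]
  have hgt : 0 < hAux ρ 1 := by
    unfold hAux
    have : ρ/1 = ρ := div_one ρ
    rw [this]
    have hA : 0 ≤ ρ^2/(1-ρ)^2 := by positivity
    nlinarith
  have hsub : Set.Icc t 1 ⊆ Set.Ioi (0:ℝ) := fun y hy => lt_of_lt_of_le ht0 hy.1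
  have := intermediate_value_Ioo ht1.le ((hAux_continuousOn hρ1).mono hsub)
  obtain ⟨x, hx, hfx⟩ := this ⟨hlt, hgt⟩
  exact ⟨x, ⟨lt_trans ht0 hx.1, hx.2⟩, hfx⟩

lemma hAux_key {ρ1 ρ2 x : ℝ} (h0 : 0 ≤ ρ1) (h12 : ρ1 < ρ2) (h2 : ρ2 < 1) (hx : 0 < x)
    (hle : hAux ρ2 x ≤ 0) : hAux ρ1 x < 0 := by
  have hρ2 : 0 < ρ2 := lt_of_le_of_lt h0 h12
  have hd1 : (0:ℝ) < (1-ρ1)^2 := by nlinarith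
  have hd2 : (0:ℝ) < (1-ρ2)^2 := by nlinarith
  have hA : ρ1^2/(1-ρ1)^2 < ρ2^2/(1-ρ2)^2 := by
    rw [div_lt_div_iff₀ hd1 hd2]
    nlinarith [mul_pos (sub_pos.2 h12) (show (0:ℝ) < ρ2*(1-ρ1)+ρ1*(1-ρ2) by nlinarith)]
  rcases le_or_gt (1/2 : ℝ) x with hx2 | hx2
  · -- x ≥ 1/2 : hAux is strictly increasing in ρ
    have h1x : 1/x ≤ 2 := by rw [div_le_iff₀ hx]; linarith
    have e : ∀ ρ : ℝ, 2*ρ - ρ/x = ρ*(2 - 1/x) := by intro ρ; field_simp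
    have hlin : ρ1*(2 - 1/x) ≤ ρ2*(2 - 1/x) :=
      mul_le_mul_of_nonneg_right h12.le (by linarith)
    have hmain : hAux ρ1 x < hAux ρ2 x := by
      unfold hAux
      linarith [mul_lt_mul_of_pos_right hA hx, hlin, e ρ1, e ρ2]
    linarith
  · -- x < 1/2 : use convexity chord through 0
    have hC : 2*x^2 + x - 1 < 0 := by nlinarith
    have hch : ρ2 * (ρ1^2/(1-ρ1)^2) ≤ ρ1 * (ρ2^2/(1-ρ2)^2) := by
      rw [mul_div_assoc', mul_div_assoc', div_le_div_iff₀ hd1 hd2]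
      nlinarith [mul_nonneg (mul_nonneg (mul_nonneg h0 hρ2.le) (sub_pos.2 h12).le)
        (by nlinarith : (0:ℝ) ≤ 1 - ρ1*ρ2)]
    have hid : ρ2 * hAux ρ1 x - ((ρ2-ρ1)*(2*x^2+x-1) + ρ1 * hAux ρ2 x)
        = (ρ2 * (ρ1^2/(1-ρ1)^2) - ρ1 * (ρ2^2/(1-ρ2)^2)) * x := by
      unfold hAux; ring
    have hbound : ρ2 * hAux ρ1 x < 0 := by
      nlinarith [mul_nonpos_of_nonneg_of_nonpos h0 hle,
        mul_pos (sub_pos.2 h12) (neg_pos.2 hC),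
        mul_le_mul_of_nonneg_right (sub_nonpos.2 hch) hx.le]
    nlinarith

lemma F_mul_eq {ρm ρp : ℝ} (hm : ρm < 1) (hp : ρp < 1) :
    ((2 - ρp) * (1 - 2 * ρp) / (1 - ρp) + ρm ^ 2 / (1 - ρm) ^ 2 +
      ρm * (1 - 2 * ρp) / (1 - ρp) ^ 2) * (1 - ρp) = hAux ρm (1 - ρp) := by
  have h1 : (1:ℝ) - ρm ≠ 0 := sub_ne_zero.2 (by linarith)
  have h2 : (1:ℝ) - ρp ≠ 0 := sub_ne_zero.2 (by linarith)
  unfold hAux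
  field_simp
  ring

lemma xsTendsto : Tendsto (fun ρ : ℝ => ρ^2/(1-ρ)^2) (nhdsWithin 1 (Set.Iio 1)) atTop := by
  have h1 : Tendsto (fun ρ : ℝ => ρ^2) (nhdsWithin 1 (Set.Iio 1)) (nhds 1) := by
    have := (continuous_pow 2).tendsto (1:ℝ)
    simpa using this.mono_left nhdsWithin_le_nhds
  have h2 : Tendsto (fun ρ : ℝ => (1-ρ)^2) (nhdsWithin 1 (Set.Iio 1))
      (nhdsWithin 0 (Set.Ioi 0)) := by
    rw [tendsto_nhdsWithin_iff]
    constructor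
    · have hc : Continuous (fun ρ : ℝ => (1-ρ)^2) := by continuity
      have h4 := hc.tendsto (1:ℝ)
      norm_num at h4
      exact h4.mono_left nhdsWithin_le_nhds
    · filter_upwards [self_mem_nhdsWithin] with ρ hρ
      have h1ρ : (0:ℝ) < 1 - ρ := by simpa using sub_pos.2 (Set.mem_Iio.1 hρ)
      exact Set.mem_Ioi.2 (by positivity)
  have h3 := h2.inv_tendsto_nhdsGT_zero
  have := Tendsto.pos_mul_atTop one_pos h1 h3
  simpa [div_eq_mul_inv] using this
/-- For the Riemann problem with `c ρ = 1/(1−ρ)`, there exists a strictly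
increasing `φ : [0,1) → (0,1]` with `φ 0 = 1/2` and `φ ρ → 1` as `ρ → 1⁻`, such that for
`ρ₋ ≤ ρ₊` the no-collision condition `F ρ₋ ρ₊ > 0` holds iff `ρ₊ < φ ρ₋`. -/
theorem exists_threshold_curve
    (F : ℝ → ℝ → ℝ)
    (hF : F = fun ρm ρp => (2 - ρp) * (1 - 2 * ρp) / (1 - ρp) + ρm ^ 2 / (1 - ρm) ^ 2 +
      ρm * (1 - 2 * ρp) / (1 - ρp) ^ 2) :
    ∃ φ : ℝ → ℝ,
      StrictMonoOn φ (Set.Ico (0 : ℝ) 1) ∧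
      φ 0 = 1 / 2 ∧
      Filter.Tendsto φ (nhdsWithin 1 (Set.Iio 1)) (nhds 1) ∧
      (∀ ρ ∈ Set.Ico (0 : ℝ) 1, φ ρ ∈ Set.Ioc (0 : ℝ) 1) ∧
      ∀ ρm ρp : ℝ, 0 ≤ ρm → ρm ≤ ρp → ρp < 1 → (0 < F ρm ρp ↔ ρp < φ ρm) := by
  have hex : ∀ ρ : ℝ, ∃ x, x ∈ Set.Ioo (0:ℝ) 1 ∧ (ρ ∈ Set.Ico (0:ℝ) 1 → hAux ρ x = 0) := by
    intro ρ
    by_cases hρ : ρ ∈ Set.Ico (0:ℝ) 1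
    · obtain ⟨x, hx, he⟩ := hAux_root hρ.1 hρ.2
      exact ⟨x, hx, fun _ => he⟩
    · exact ⟨1/2, by norm_num, fun h => absurd h hρ⟩
  choose xs hxs hroot using hex
  -- sign characterization
  have hiff : ∀ ρ, 0 ≤ ρ → ρ < 1 → ∀ y, 0 < y → (0 < hAux ρ y ↔ xs ρ < y) := by
    intro ρ h0 h1 y hy
    have hsm := hAux_strictMono h0 h1
    have hx := hxs ρ
    have hr := hroot ρ ⟨h0, h1⟩
    constructor
    · intro hpos
      by_contra hc
      push_neg at hc
      rcases eq_or_lt_of_le hc with he | hlt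
      · rw [← he] at hr; linarith
      · have := hsm (Set.mem_Ioi.2 hy) (Set.mem_Ioi.2 hx.1) hlt
        linarith
    · intro hlt
      have := hsm (Set.mem_Ioi.2 hx.1) (Set.mem_Ioi.2 hy) hlt
      rw [hr] at this
      exact this
  -- strict decrease of root
  have hdec : ∀ ρ1 ρ2, 0 ≤ ρ1 → ρ1 < ρ2 → ρ2 < 1 → xs ρ2 < xs ρ1 := by
    intro ρ1 ρ2 h0 h12 h2
    have hr2 := hroot ρ2 ⟨le_trans h0 h12.le, h2⟩
    have hneg : hAux ρ1 (xs ρ2) < 0 := hAux_key h0 h12 h2 (hxs ρ2).1 (le_of_eq hr2)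
    by_contra hc
    push_neg at hc
    rcases eq_or_lt_of_le hc with he | hlt
    · rw [← he] at hneg
      rw [hroot ρ1 ⟨h0, lt_trans h12 h2⟩] at hneg
      exact lt_irrefl 0 hneg
    · have := hAux_strictMono h0 (lt_trans h12 h2)
        (Set.mem_Ioi.2 (hxs ρ1).1) (Set.mem_Ioi.2 (hxs ρ2).1) hlt
      rw [hroot ρ1 ⟨h0, lt_trans h12 h2⟩] at this
      linarith
  refine ⟨fun ρ => 1 - xs ρ, ?_, ?_, ?_, ?_, ?_⟩
  · intro a ha b hb hab
    have := hdec a b ha.1 hab hb.2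
    simp only
    linarith
  · have h12 : hAux 0 (1/2) = 0 := by unfold hAux; norm_num
    have h0mem : (0:ℝ) ∈ Set.Ico (0:ℝ) 1 := by norm_num
    have := (hAux_strictMono le_rfl one_pos).injOn
      (Set.mem_Ioi.2 (hxs 0).1) (Set.mem_Ioi.2 (by norm_num : (0:ℝ) < 1/2))
      (by rw [hroot 0 h0mem, h12])
    simp only [this]
    norm_num
  · have hxs0 : Filter.Tendsto xs (nhdsWithin 1 (Set.Iio 1)) (nhds 0) := by
      rw [tendsto_order]
      constructor
      · intro b hb
        filter_upwards [Ioo_mem_nhdsLT_of_mem (by norm_num : (1:ℝ) ∈ Set.Ioc 0 1)] with ρ hρ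
        exact lt_trans hb (hxs ρ).1
      · intro b hb
        set ε : ℝ := min b (1/2) with hε_def
        have hε0 : 0 < ε := lt_min hb (by norm_num)
        have hε1 : ε ≤ 1/2 := min_le_right _ _
        have hεb : ε ≤ b := min_le_left _ _
        filter_upwards [Ioo_mem_nhdsLT_of_mem (by norm_num : (1:ℝ) ∈ Set.Ioc 0 1),
          xsTendsto.eventually_gt_atTop ((1 + 1/ε)/ε)] with ρ hρ hA
        have hρ0 : 0 < ρ := hρ.1
        have hρ1 : ρ < 1 := hρ.2
        have hpos : 0 < hAux ρ ε := by
          unfold hAux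
          have e1 : ((1 + 1/ε)/ε) * ε = 1 + 1/ε := by field_simp
          have e2 : ρ/ε ≤ 1/ε := by gcongr <;> linarith
          nlinarith [mul_lt_mul_of_pos_right hA hε0, sq_nonneg ε]
        have := (hiff ρ hρ0.le hρ1 ε hε0).1 hpos
        linarith
    have : Filter.Tendsto (fun ρ => 1 - xs ρ) (nhdsWithin 1 (Set.Iio 1)) (nhds (1 - 0)) :=
      Filter.Tendsto.const_sub 1 hxs0
    simpa using this
  · intro ρ hρ
    have h := hxs ρ
    simp only [Set.mem_Ioc]
    constructor
    · linarith [h.2]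
    · linarith [h.1]
  · intro ρm ρp h0 hmp hp1
    have hm1 : ρm < 1 := lt_of_le_of_lt hmp hp1
    have hxp : (0:ℝ) < 1 - ρp := by linarith
    have hFv : F ρm ρp = (2 - ρp) * (1 - 2 * ρp) / (1 - ρp) + ρm ^ 2 / (1 - ρm) ^ 2 +
        ρm * (1 - 2 * ρp) / (1 - ρp) ^ 2 := by rw [hF]
    have e := F_mul_eq hm1 hp1
    have hiffρ := hiff ρm h0 hm1 (1-ρp) hxp
    constructor
    · intro h
      have hFpos : 0 < F ρm ρp := h
      rw [hFv] at hFpos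
      have : 0 < hAux ρm (1-ρp) := by rw [← e]; exact mul_pos hFpos hxp
      have := hiffρ.1 this
      simp only
      linarith
    · intro h
      simp only at h
      have hx : xs ρm < 1 - ρp := by linarith
      have hpos : 0 < hAux ρm (1-ρp) := hiffρ.2 hx
      rw [← e] at hpos
      rw [hFv]
      by_contra hc
      push_neg at hc
      nlinarith
end

section
/- Continuity and strict monotonicity of the turning-point functional: if R₁, R₂ : [−1,1] → [0, ρ_max] are measurable with c ∘ R_j integrable, and ξ_j denotes the unique solution of ∫_{−1}^{ξ_j} c(R_j) = ∫_{ξ_j}^{1} c(R_j), then |ξ₁ − ξ₂| ≤ (1/2)·‖c(R₁(·)) − c(R₂(·))‖_{L¹(−1,1)}, using that c ≥ 1. -/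
open Set MeasureTheory

lemma split_Ioc {h : ℝ → ℝ} {a b c : ℝ} (hab : a ≤ b) (hbc : b ≤ c)
    (hint : IntegrableOn h (Set.Ioc a c)) :
    (∫ y in Set.Ioc a c, h y) = (∫ y in Set.Ioc a b, h y) + ∫ y in Set.Ioc b c, h y := by
  rw [← Set.Ioc_union_Ioc_eq_Ioc hab hbc,
    setIntegral_union (Set.Ioc_disjoint_Ioc_of_le le_rfl) measurableSet_Ioc
      (hint.mono_set (by rw [← Set.Ioc_union_Ioc_eq_Ioc hab hbc]; exact Set.subset_union_left))
      (hint.mono_set (by rw [← Set.Ioc_union_Ioc_eq_Ioc hab hbc]; exact Set.subset_union_right))]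

lemma tp_aux (f g : ℝ → ℝ)
    (hf : IntegrableOn f (Set.Icc (-1 : ℝ) 1)) (hg : IntegrableOn g (Set.Icc (-1 : ℝ) 1))
    (hf1 : ∀ y ∈ Set.Icc (-1 : ℝ) 1, 1 ≤ f y)
    (ξ₁ ξ₂ : ℝ) (h1 : ξ₁ ∈ Set.Ioo (-1 : ℝ) 1) (h2 : ξ₂ ∈ Set.Ioo (-1 : ℝ) 1)
    (hle : ξ₁ ≤ ξ₂)
    (e1 : (∫ y in Set.Ioc (-1 : ℝ) ξ₁, f y) = ∫ y in Set.Ioc ξ₁ (1 : ℝ), f y)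
    (e2 : (∫ y in Set.Ioc (-1 : ℝ) ξ₂, g y) = ∫ y in Set.Ioc ξ₂ (1 : ℝ), g y) :
    ξ₂ - ξ₁ ≤ (1 / 2) * ∫ y in Set.Ioc (-1 : ℝ) 1, |f y - g y| := by
  have hIcc : Set.Ioc (-1 : ℝ) 1 ⊆ Set.Icc (-1 : ℝ) 1 := Set.Ioc_subset_Icc_self
  have hf' : IntegrableOn f (Set.Ioc (-1 : ℝ) 1) := hf.mono_set hIcc
  have hg' : IntegrableOn g (Set.Ioc (-1 : ℝ) 1) := hg.mono_set hIcc
  have hfg : IntegrableOn (fun y => f y - g y) (Set.Ioc (-1 : ℝ) 1) := hf'.sub hg'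
  have hfgd : IntegrableOn (fun y => f y - g y) (Set.Ioc (-1 : ℝ) ξ₂) :=
    hfg.mono_set (Set.Ioc_subset_Ioc_right h2.2.le)
  have hfgu : IntegrableOn (fun y => f y - g y) (Set.Ioc ξ₂ (1 : ℝ)) :=
    hfg.mono_set (Set.Ioc_subset_Ioc_left h2.1.le)
  -- splits of f over (-1, ξ₂] = (-1, ξ₁] ∪ (ξ₁, ξ₂] and (ξ₁,1] = (ξ₁,ξ₂] ∪ (ξ₂,1]
  have sf1 : (∫ y in Set.Ioc ξ₁ (1 : ℝ), f y)
      = (∫ y in Set.Ioc ξ₁ ξ₂, f y) + ∫ y in Set.Ioc ξ₂ (1 : ℝ), f y :=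
    split_Ioc hle h2.2.le (hf'.mono_set (Set.Ioc_subset_Ioc_left h1.1.le))
  have sf2 : (∫ y in Set.Ioc (-1 : ℝ) ξ₂, f y)
      = (∫ y in Set.Ioc (-1 : ℝ) ξ₁, f y) + ∫ y in Set.Ioc ξ₁ ξ₂, f y :=
    split_Ioc h1.1.le hle (hf'.mono_set (Set.Ioc_subset_Ioc_right h2.2.le))
  -- split of |f-g| over (-1,1] at ξ₂
  have sabs : (∫ y in Set.Ioc (-1 : ℝ) 1, |f y - g y|)
      = (∫ y in Set.Ioc (-1 : ℝ) ξ₂, |f y - g y|) + ∫ y in Set.Ioc ξ₂ (1 : ℝ), |f y - g y| :=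
    split_Ioc h2.1.le h2.2.le hfg.abs
  -- D = ∫_{(-1,ξ₂]} (f-g), E = ∫_{(ξ₂,1]} (f-g)
  have hD : (∫ y in Set.Ioc (-1 : ℝ) ξ₂, (f y - g y))
      = (∫ y in Set.Ioc (-1 : ℝ) ξ₂, f y) - ∫ y in Set.Ioc (-1 : ℝ) ξ₂, g y :=
    integral_sub (hf'.mono_set (Set.Ioc_subset_Ioc_right h2.2.le))
      (hg'.mono_set (Set.Ioc_subset_Ioc_right h2.2.le))
  have hE : (∫ y in Set.Ioc ξ₂ (1 : ℝ), (f y - g y))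
      = (∫ y in Set.Ioc ξ₂ (1 : ℝ), f y) - ∫ y in Set.Ioc ξ₂ (1 : ℝ), g y :=
    integral_sub (hf'.mono_set (Set.Ioc_subset_Ioc_left h2.1.le))
      (hg'.mono_set (Set.Ioc_subset_Ioc_left h2.1.le))
  -- |D| ≤ ∫ |f-g| on lower piece, similarly E
  have hDabs : |∫ y in Set.Ioc (-1 : ℝ) ξ₂, (f y - g y)|
      ≤ ∫ y in Set.Ioc (-1 : ℝ) ξ₂, |f y - g y| := by
    simpa [Real.norm_eq_abs] using
      norm_integral_le_integral_norm (μ := volume.restrict (Set.Ioc (-1 : ℝ) ξ₂))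
        (f := fun y => f y - g y)
  have hEabs : |∫ y in Set.Ioc ξ₂ (1 : ℝ), (f y - g y)|
      ≤ ∫ y in Set.Ioc ξ₂ (1 : ℝ), |f y - g y| := by
    simpa [Real.norm_eq_abs] using
      norm_integral_le_integral_norm (μ := volume.restrict (Set.Ioc ξ₂ (1 : ℝ)))
        (f := fun y => f y - g y)
  -- lower bound on B = ∫_{(ξ₁,ξ₂]} f
  have hB : ξ₂ - ξ₁ ≤ ∫ y in Set.Ioc ξ₁ ξ₂, f y := by
    have hone : (∫ y in Set.Ioc ξ₁ ξ₂, (1 : ℝ)) = ξ₂ - ξ₁ := by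
      simp [Real.volume_Ioc, ENNReal.toReal_ofReal (sub_nonneg.2 hle), hle]
    rw [← hone]
    refine setIntegral_mono_on (integrableOn_const (by simp [Real.volume_Ioc]))
      (hf.mono_set (Set.Ioc_subset_Icc_self.trans (Set.Icc_subset_Icc h1.1.le h2.2.le)))
      measurableSet_Ioc (fun y hy => hf1 y ⟨h1.1.le.trans hy.1.le, hy.2.trans h2.2.le⟩)
  -- conclude: D - E = 2B ≥ 2(ξ₂-ξ₁); |D| + |E| ≤ N
  have key : (∫ y in Set.Ioc (-1 : ℝ) ξ₂, (f y - g y)) - (∫ y in Set.Ioc ξ₂ (1 : ℝ), (f y - g y))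
      = 2 * ∫ y in Set.Ioc ξ₁ ξ₂, f y := by
    rw [hD, hE]; linarith [e1, e2, sf1, sf2]
  nlinarith [hDabs, hEabs, abs_le.1 hDabs, abs_le.1 hEabs, key, hB,
    neg_abs_le (∫ y in Set.Ioc ξ₂ (1 : ℝ), (f y - g y)),
    le_abs_self (∫ y in Set.Ioc (-1 : ℝ) ξ₂, (f y - g y))]


/-- Continuity (and stability) of the turning-point functional: if
`R₁, R₂ : [−1,1] → [0, ρ_max]` are measurable with `c ∘ Rⱼ` integrable and `c ≥ 1`, and
`ξⱼ ∈ (−1,1)` is the unique solution of `∫_{−1}^{ξⱼ} c(Rⱼ) = ∫_{ξⱼ}^{1} c(Rⱼ)`, then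
`|ξ₁ − ξ₂| ≤ (1/2)·‖c(R₁(·)) − c(R₂(·))‖_{L¹(−1,1)}`. -/
theorem turning_point_stability
    (ρmax : ℝ) (hρmax : ρmax ∈ Set.Ioc (0 : ℝ) 1)
    (c : ℝ → ℝ) (hccont : ContinuousOn c (Set.Icc 0 ρmax))
    (hc1 : ∀ ρ ∈ Set.Icc (0 : ℝ) ρmax, 1 ≤ c ρ)
    (R₁ R₂ : ℝ → ℝ) (hR₁ : Measurable R₁) (hR₂ : Measurable R₂)
    (hR₁range : ∀ y ∈ Set.Icc (-1 : ℝ) 1, R₁ y ∈ Set.Icc 0 ρmax)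
    (hR₂range : ∀ y ∈ Set.Icc (-1 : ℝ) 1, R₂ y ∈ Set.Icc 0 ρmax)
    (hint₁ : IntegrableOn (fun y => c (R₁ y)) (Set.Icc (-1 : ℝ) 1))
    (hint₂ : IntegrableOn (fun y => c (R₂ y)) (Set.Icc (-1 : ℝ) 1))
    (ξ₁ ξ₂ : ℝ) (hξ₁mem : ξ₁ ∈ Set.Ioo (-1 : ℝ) 1) (hξ₂mem : ξ₂ ∈ Set.Ioo (-1 : ℝ) 1)
    (hξ₁ : (∫ y in Set.Ioc (-1 : ℝ) ξ₁, c (R₁ y)) = ∫ y in Set.Ioc ξ₁ (1 : ℝ), c (R₁ y))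
    (hξ₂ : (∫ y in Set.Ioc (-1 : ℝ) ξ₂, c (R₂ y)) = ∫ y in Set.Ioc ξ₂ (1 : ℝ), c (R₂ y)) :
    |ξ₁ - ξ₂| ≤ (1 / 2) * ∫ y in Set.Ioc (-1 : ℝ) 1, |c (R₁ y) - c (R₂ y)| := by
  have h1 : ∀ y ∈ Set.Icc (-1 : ℝ) 1, 1 ≤ c (R₁ y) := fun y hy => hc1 _ (hR₁range y hy)
  have h2 : ∀ y ∈ Set.Icc (-1 : ℝ) 1, 1 ≤ c (R₂ y) := fun y hy => hc1 _ (hR₂range y hy)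
  rcases le_total ξ₁ ξ₂ with h | h
  · rw [abs_sub_comm, abs_of_nonneg (sub_nonneg.2 h)]
    exact tp_aux _ _ hint₁ hint₂ h1 ξ₁ ξ₂ hξ₁mem hξ₂mem h hξ₁ hξ₂
  · rw [abs_of_nonneg (sub_nonneg.2 h)]
    have := tp_aux _ _ hint₂ hint₁ h2 ξ₂ ξ₁ hξ₂mem hξ₁mem h hξ₂ hξ₁
    simpa only [abs_sub_comm (c (R₂ _))] using this
end
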